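/- Let u be a full Decision-DNNF vertex over X whose arcs carry the exact marginal probabilities, i.e., for every decision vertex v reachable from u, p_b(v) = Z(ch_b(v)) / (Z(ch₀(v)) + Z(ch₁(v))) whenever the denominator is nonzero. Then for every assignment ω over X that is a model of the formula represented by u, Pr_u(ω) = 1/Z(u), and Pr_u(ω) = 0 for non-models; in particular Pr_u is the uniform distribution on the models of u. -/

import Mathlib

/-- Full Decision-DNNF formulas (binary decomposition vertices); decision vertices
carry the probabilities p₀, p₁ on their outgoing arcs. -/
inductive DDNNF (V : Type) where
  | bot : DDNNF V
  | top : DDNNF V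
  | dec (x : V) (p₀ p₁ : ℝ) (c₀ c₁ : DDNNF V) : DDNNF V
  | conj (a b : DDNNF V) : DDNNF V

namespace DDNNF

variable {V : Type} [DecidableEq V]

/-- Variables occurring in a Decision-DNNF. -/
def vars : DDNNF V → Finset V
  | bot => ∅
  | top => ∅
  | dec x _ _ c₀ c₁ => insert x (c₀.vars ∪ c₁.vars)
  | conj a b => a.vars ∪ b.vars

/-- The Boolean function represented. -/
def eval : DDNNF V → (V → Bool) → Bool
  | bot, _ => false
  | top, _ => true
  | dec x _ _ c₀ c₁, ω => if ω x then c₁.eval ω else c₀.eval ω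
  | conj a b, ω => a.eval ω && b.eval ω

/-- Structural well-formedness: decision variables do not reappear below, the
children of decomposition vertices share no variables, and the arc probabilities
are nonnegative, sum to 1 and vanish exactly on ⊥-children. -/
def wf : DDNNF V → Prop
  | bot => True
  | top => True
  | dec x p₀ p₁ c₀ c₁ =>
      0 ≤ p₀ ∧ 0 ≤ p₁ ∧ p₀ + p₁ = 1 ∧ (p₀ = 0 ↔ c₀ = bot) ∧ (p₁ = 0 ↔ c₁ = bot) ∧
      x ∉ c₀.vars ∧ x ∉ c₁.vars ∧ c₀.wf ∧ c₁.wf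
  | conj a b => Disjoint a.vars b.vars ∧ a.wf ∧ b.wf

/-- The joint distribution represented by a Decision-DNNF vertex over the
variable set `V` of cardinality `m`. -/
noncomputable def pr (m : ℕ) : DDNNF V → (V → Bool) → ℝ
  | bot, _ => 0
  | top, _ => ((2 : ℝ) ^ m)⁻¹
  | dec x p₀ p₁ c₀ c₁, ω => if ω x then 2 * p₁ * c₁.pr m ω else 2 * p₀ * c₀.pr m ω
  | conj a b, ω => (2 : ℝ) ^ m * a.pr m ω * b.pr m ω

end DDNNF

namespace DDNNF

variable {V : Type} [DecidableEq V]

/-- The (real-valued) model count over `m` variables computed by the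
Decision-DNNF counting recursion: Z(⊥)=0, Z(⊤)=2^m,
Z(decision) = (Z₀+Z₁)/2, Z(∧) = 2^{-m}·Z(a)·Z(b). -/
noncomputable def Zr (m : ℕ) : DDNNF V → ℝ
  | bot => 0
  | top => (2 : ℝ) ^ m
  | dec _ _ _ c₀ c₁ => (c₀.Zr m + c₁.Zr m) / 2
  | conj a b => ((2 : ℝ) ^ m)⁻¹ * a.Zr m * b.Zr m

/-- The arcs carry the exact marginal probabilities: for every decision vertex,
p_b = Z(ch_b) / (Z(ch₀) + Z(ch₁)) whenever the denominator is nonzero. -/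
def exactMarginals (m : ℕ) : DDNNF V → Prop
  | bot => True
  | top => True
  | dec _ p₀ p₁ c₀ c₁ =>
      (c₀.Zr m + c₁.Zr m ≠ 0 →
        p₀ = c₀.Zr m / (c₀.Zr m + c₁.Zr m) ∧ p₁ = c₁.Zr m / (c₀.Zr m + c₁.Zr m)) ∧
      c₀.exactMarginals m ∧ c₁.exactMarginals m
  | conj a b => a.exactMarginals m ∧ b.exactMarginals m

end DDNNF


namespace DDNNF

variable {V : Type} [DecidableEq V]

lemma eval_congr {u : DDNNF V} {ω ω' : V → Bool}
    (h : ∀ x ∈ u.vars, ω x = ω' x) : u.eval ω = u.eval ω' := by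
  induction u with
  | bot => rfl
  | top => rfl
  | dec x p₀ p₁ c₀ c₁ ih₀ ih₁ =>
      simp only [vars, Finset.mem_insert, Finset.mem_union] at h
      simp only [eval]
      rw [h x (Or.inl rfl), ih₀ (fun y hy => h y (Or.inr (Or.inl hy))),
        ih₁ (fun y hy => h y (Or.inr (Or.inr hy)))]
  | conj a b iha ihb =>
      simp only [vars, Finset.mem_union] at h
      simp only [eval]
      rw [iha (fun y hy => h y (Or.inl hy)), ihb (fun y hy => h y (Or.inr hy))]

lemma zr_nonneg (m : ℕ) (u : DDNNF V) (hwf : u.wf) : 0 ≤ u.Zr m := by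
  induction u with
  | bot => simp [Zr]
  | top => simp only [Zr]; positivity
  | dec x p₀ p₁ c₀ c₁ ih₀ ih₁ =>
      obtain ⟨_, _, _, _, _, _, _, h₀, h₁⟩ := hwf
      simp only [Zr]
      have := ih₀ h₀; have := ih₁ h₁
      positivity
  | conj a b iha ihb =>
      obtain ⟨_, ha, hb⟩ := hwf
      simp only [Zr]
      have := iha ha; have := ihb hb
      positivity

lemma pr_zero_of_unsat (m : ℕ) (u : DDNNF V) (hwf : u.wf)
    (hunsat : ∀ ω, u.eval ω = false) : ∀ ω, u.pr m ω = 0 := by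
  induction u with
  | bot => intro ω; rfl
  | top => exact absurd (hunsat (fun _ => true)) (by simp [eval])
  | dec x p₀ p₁ c₀ c₁ ih₀ ih₁ =>
      obtain ⟨_, _, _, _, _, hx₀, hx₁, h₀, h₁⟩ := hwf
      have hu₁ : ∀ ω, c₁.eval ω = false := by
        intro ω
        have h := hunsat (Function.update ω x true)
        simp only [eval, Function.update_self, if_true] at h
        rw [eval_congr (ω' := Function.update ω x true)
          (fun y hy => (Function.update_of_ne
            (fun hyx : y = x => hx₁ (by rw [← hyx]; exact hy)) _ _).symm)]
        exact h
      have hu₀ : ∀ ω, c₀.eval ω = false := by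
        intro ω
        have h := hunsat (Function.update ω x false)
        simp only [eval, Function.update_self, Bool.false_eq_true, if_false] at h
        rw [eval_congr (ω' := Function.update ω x false)
          (fun y hy => (Function.update_of_ne
            (fun hyx : y = x => hx₀ (by rw [← hyx]; exact hy)) _ _).symm)]
        exact h
      intro ω
      simp only [pr]
      split <;> simp [ih₀ h₀ hu₀ ω, ih₁ h₁ hu₁ ω]
  | conj a b iha ihb =>
      obtain ⟨hdisj, ha, hb⟩ := hwf
      have : (∀ ω, a.eval ω = false) ∨ (∀ ω, b.eval ω = false) := by
        by_contra h
        push_neg at h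
        obtain ⟨⟨ωa, hωa⟩, ⟨ωb, hωb⟩⟩ := h
        set ω : V → Bool := fun y => if y ∈ a.vars then ωa y else ωb y with hω
        have h1 : a.eval ω = a.eval ωa :=
          eval_congr (fun y hy => by simp [hω, hy])
        have h2 : b.eval ω = b.eval ωb :=
          eval_congr (fun y hy => by
            simp [hω, Finset.disjoint_right.mp hdisj hy])
        have := hunsat ω
        simp only [eval, Bool.and_eq_false_eq_eq_false_or_eq_false, h1, h2] at this
        rcases this with h | h
        · exact hωa (by simp [h])
        · exact hωb (by simp [h])
      intro ω
      rcases this with h | h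
      · simp [pr, iha ha h ω]
      · simp [pr, ihb hb h ω]

lemma key (m : ℕ) (u : DDNNF V) (hwf : u.wf) (hexact : u.exactMarginals m)
    (hsat : ∃ ω, u.eval ω = true) :
    0 < u.Zr m ∧ ∀ ω, u.pr m ω = if u.eval ω = true then (u.Zr m)⁻¹ else 0 := by
  induction u with
  | bot => obtain ⟨ω, hω⟩ := hsat; simp [eval] at hω
  | top =>
      constructor
      · simp only [Zr]; positivity
      · intro ω; simp [pr, eval, Zr]
  | dec x p₀ p₁ c₀ c₁ ih₀ ih₁ =>
      obtain ⟨hp₀, hp₁, hsum, hb₀, hb₁, hx₀, hx₁, h₀, h₁⟩ := hwf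
      obtain ⟨hex, he₀, he₁⟩ := hexact
      have hZ₀ : 0 ≤ c₀.Zr m := zr_nonneg m c₀ h₀
      have hZ₁ : 0 ≤ c₁.Zr m := zr_nonneg m c₁ h₁
      -- one child is satisfiable
      have hZsum : 0 < c₀.Zr m + c₁.Zr m := by
        obtain ⟨ω, hω⟩ := hsat
        simp only [eval] at hω
        by_cases hx : ω x
        · rw [if_pos hx] at hω
          have := (ih₁ h₁ he₁ ⟨ω, hω⟩).1
          linarith
        · rw [if_neg hx] at hω
          have := (ih₀ h₀ he₀ ⟨ω, hω⟩).1
          linarith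
      obtain ⟨hp₀eq, hp₁eq⟩ := hex (ne_of_gt hZsum)
      refine ⟨by simp only [Zr]; linarith, ?_⟩
      intro ω
      simp only [pr, eval, Zr]
      by_cases hx : ω x
      · simp only [if_pos hx]
        by_cases hc : c₁.eval ω = true
        · rw [if_pos hc]
          have hsat₁ : ∃ ω', c₁.eval ω' = true := ⟨ω, hc⟩
          obtain ⟨hZ₁pos, hpr₁⟩ := ih₁ h₁ he₁ hsat₁
          rw [hpr₁ ω, if_pos hc, hp₁eq]
          field_simp
        · rw [if_neg hc]
          by_cases hs : ∃ ω', c₁.eval ω' = true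
          · obtain ⟨_, hpr₁⟩ := ih₁ h₁ he₁ hs
            rw [hpr₁ ω, if_neg hc, mul_zero]
          · push_neg at hs
            rw [pr_zero_of_unsat m c₁ h₁ (fun ω' => by
              simpa using hs ω') ω, mul_zero]
      · simp only [if_neg hx]
        by_cases hc : c₀.eval ω = true
        · rw [if_pos hc]
          have hsat₀ : ∃ ω', c₀.eval ω' = true := ⟨ω, hc⟩
          obtain ⟨hZ₀pos, hpr₀⟩ := ih₀ h₀ he₀ hsat₀
          rw [hpr₀ ω, if_pos hc, hp₀eq]
          field_simp
        · rw [if_neg hc]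
          by_cases hs : ∃ ω', c₀.eval ω' = true
          · obtain ⟨_, hpr₀⟩ := ih₀ h₀ he₀ hs
            rw [hpr₀ ω, if_neg hc, mul_zero]
          · push_neg at hs
            rw [pr_zero_of_unsat m c₀ h₀ (fun ω' => by
              simpa using hs ω') ω, mul_zero]
  | conj a b iha ihb =>
      obtain ⟨hdisj, ha, hb⟩ := hwf
      obtain ⟨hea, heb⟩ := hexact
      obtain ⟨ω₀, hω₀⟩ := hsat
      simp only [eval, Bool.and_eq_true] at hω₀
      obtain ⟨hZa, hpra⟩ := iha ha hea ⟨ω₀, hω₀.1⟩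
      obtain ⟨hZb, hprb⟩ := ihb hb heb ⟨ω₀, hω₀.2⟩
      have h2m : (0:ℝ) < (2:ℝ) ^ m := by positivity
      refine ⟨by simp only [Zr]; positivity, ?_⟩
      intro ω
      simp only [pr, eval, Zr, Bool.and_eq_true]
      rw [hpra ω, hprb ω]
      split_ifs with h1 h2 h3 <;>
        first
          | tauto
          | (field_simp; done)
          | (rw [mul_inv, mul_inv, inv_inv]; ring)
          | ring

end DDNNF

/-- if a well-formed satisfiable full Decision-DNNF vertex `u` carries
the exact marginal probabilities on its arcs, then Pr_u is uniform on the models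
of `u`: Pr_u(ω) = 1/Z(u) on models and Pr_u(ω) = 0 on non-models. -/
theorem stmt5 {V : Type} [Fintype V] [DecidableEq V]
    (u : DDNNF V) (hwf : u.wf)
    (hexact : u.exactMarginals (Fintype.card V))
    (hsat : ∃ ω, u.eval ω = true) :
    ∀ ω : V → Bool,
      u.pr (Fintype.card V) ω =
        if u.eval ω = true then (u.Zr (Fintype.card V))⁻¹ else 0 :=
  (DDNNF.key (Fintype.card V) u hwf hexact hsat).2
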